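/- Let P be a logic program with negation as failure in the head and D_P its corresponding ABA framework. Then I ⊆ HB_P is a stable model of P if and only if Δ(I) = {not p | p ∉ I} is a stable extension of D_P. -/

import Mathlib

/- Literals: atoms and naf-negated atoms -/
inductive Lit (α : Type) where
  | pos : α → Lit α
  | neg : α → Lit α
deriving DecidableEq

/- A rule with a head sentence and a finite body of sentences -/
structure ABARule (σ : Type) where
  head : σ
  body : Finset σ

/- A logic program with naf in the head: rules over literals -/
abbrev LP (α : Type) := Set (ABARule (Lit α))

/-- Herbrand base: atoms occurring in P -/
def HB {α : Type} (P : LP α) : Set α :=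
  {a | ∃ r ∈ P, r.head = Lit.pos a ∨ r.head = Lit.neg a ∨ Lit.pos a ∈ r.body ∨ Lit.neg a ∈ r.body}

/-- Δ(I) = {not p | p ∈ HB_P, p ∉ I} -/
def DeltaSet {α : Type} (P : LP α) (I : Set α) : Set (Lit α) :=
  {l | ∃ p, p ∈ HB P ∧ p ∉ I ∧ l = Lit.neg p}

/- Positive program rules: possibly empty head (constraints) -/
structure PosRule (α : Type) where
  head : Option α
  body : Set α

def bodyPos {α : Type} (r : ABARule (Lit α)) : Set α := {a | Lit.pos a ∈ r.body}
def bodyNeg {α : Type} (r : ABARule (Lit α)) : Set α := {a | Lit.neg a ∈ r.body}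
def headPos {α : Type} (r : ABARule (Lit α)) : Option α :=
  match r.head with
  | .pos a => some a
  | .neg _ => none
def headNeg {α : Type} (r : ABARule (Lit α)) : Set α := {a | r.head = Lit.neg a}

/-- The reduct P^I -/
def reduct {α : Type} (P : LP α) (I : Set α) : Set (PosRule α) :=
  {q | ∃ r ∈ P, bodyNeg r ∩ I = ∅ ∧ headNeg r ⊆ I ∧ q = ⟨headPos r, bodyPos r⟩}

/-- Conditions (a) and (b): J is a (supported) Herbrand model of a positive program Q -/
def SatModel {α : Type} (Q : Set (PosRule α)) (J : Set α) : Prop :=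
  (∀ p, p ∈ J ↔ ∃ q ∈ Q, q.head = some p ∧ q.body ⊆ J) ∧
  (∀ q ∈ Q, q.head = none → ¬ q.body ⊆ J)

/-- Stable model: ⊆-minimal set of atoms satisfying (a) and (b) w.r.t. P^I -/
def StableModel {α : Type} (P : LP α) (I : Set α) : Prop :=
  I ⊆ HB P ∧ SatModel (reduct P I) I ∧ ∀ J ⊆ I, SatModel (reduct P I) J → J = I

/-- Derivability in a positive program -/
inductive PosDeriv {α : Type} (Q : Set (PosRule α)) : α → Prop
  | step {q : PosRule α} {a : α} : q ∈ Q → q.head = some a →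
      (∀ b ∈ q.body, PosDeriv Q b) → PosDeriv Q a

/-- Tree-derivability of a sentence from (a subset of) the assumption set S using rules R -/
inductive Deriv {σ : Type} (R : Set (ABARule σ)) (S : Set σ) : σ → Prop
  | assum {s : σ} : s ∈ S → Deriv R S s
  | step {r : ABARule σ} : r ∈ R → (∀ b ∈ r.body, Deriv R S b) → Deriv R S r.head

/- Assumption-based argumentation frameworks -/
structure ABAF (σ : Type) where
  L : Set σ
  R : Set (ABARule σ)
  A : Set σ
  co : σ → σ

def ThSet {σ : Type} (D : ABAF σ) (S : Set σ) : Set σ := {p | Deriv D.R S p}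

def ConflictFree {σ : Type} (D : ABAF σ) (S : Set σ) : Prop :=
  ∀ a ∈ S, ¬ Deriv D.R S (D.co a)

def ABAClosed {σ : Type} (D : ABAF σ) (S : Set σ) : Prop :=
  ∀ a ∈ D.A, Deriv D.R S a → a ∈ S

/-- Stable extensions: closed conflict-free sets attacking every outside assumption -/
def StableExt {σ : Type} (D : ABAF σ) (S : Set σ) : Prop :=
  S ⊆ D.A ∧ ConflictFree D S ∧ ABAClosed D S ∧
    ∀ x ∈ D.A, x ∉ S → Deriv D.R S (D.co x)

/-- Set-stable extensions: attack the closure cl({x}) of every outside assumption -/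
def SetStableExt {σ : Type} (D : ABAF σ) (S : Set σ) : Prop :=
  S ⊆ D.A ∧ ConflictFree D S ∧ ABAClosed D S ∧
    ∀ x ∈ D.A, x ∉ S → ∃ b ∈ D.A, Deriv D.R {x} b ∧ Deriv D.R S (D.co b)

/-- The ABA framework D_P corresponding to an LP P -/
def ABAFofLP {α : Type} (P : LP α) : ABAF (Lit α) :=
  { L := {l | ∃ p ∈ HB P, l = Lit.pos p ∨ l = Lit.neg p}
    R := P
    A := {l | ∃ p ∈ HB P, l = Lit.neg p}
    co := fun l => match l with
      | .pos p => Lit.pos p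
      | .neg p => Lit.pos p }

/-- The LP-ABA fragment: no assumption is a contrary, contrary injective, L = A ∪ Ā
    (together with well-formedness of rules and contraries w.r.t. the language) -/
def IsLPABA {σ : Type} (D : ABAF σ) : Prop :=
  (∀ r ∈ D.R, r.head ∈ D.L ∧ ∀ b ∈ r.body, b ∈ D.L) ∧
  D.A ⊆ D.L ∧
  (∀ a ∈ D.A, D.co a ∉ D.A) ∧
  Set.InjOn D.co D.A ∧
  D.L = D.A ∪ D.co '' D.A

open Classical in
/-- rep(a) = not ā for assumptions, rep(s) = s (as an atom) otherwise -/
noncomputable def repLit {σ : Type} (D : ABAF σ) (s : σ) : Lit σ :=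
  if s ∈ D.A then Lit.neg (D.co s) else Lit.pos s

noncomputable def repRule {σ : Type} [DecidableEq σ] (D : ABAF σ) (r : ABARule σ) :
    ABARule (Lit σ) :=
  ⟨repLit D r.head, r.body.image (repLit D)⟩

/-- The LP P_D associated with an (LP-)ABAF D -/
noncomputable def LPofABAF {σ : Type} [DecidableEq σ] (D : ABAF σ) : LP σ :=
  (repRule D) '' D.R

/-- One-step support operator -/
def suppOp {α : Type} (P : LP α) (S : Set (Lit α)) : Set (Lit α) :=
  S ∪ {l | ∃ r ∈ P, r.head = l ∧ ∀ b ∈ r.body, b ∈ S}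

/-- Closure cl(S) = ⋃_{i>0} suppⁱ(S) -/
def clLP {α : Type} (P : LP α) (S : Set (Lit α)) : Set (Lit α) :=
  ⋃ i : ℕ, (suppOp P)^[i + 1] S

/-- The set-stable reduct P^I_s = P^I ∪ {a ← b | a ≠ b, not b ∈ cl({not a})} -/
def sReduct {α : Type} (P : LP α) (I : Set α) : Set (PosRule α) :=
  reduct P I ∪
    {q | ∃ a b, a ∈ HB P ∧ b ∈ HB P ∧ a ≠ b ∧ Lit.neg b ∈ clLP P {Lit.neg a} ∧
        q = ⟨some a, {b}⟩}

/-- Set-stable models -/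
def SetStableModel {α : Type} (P : LP α) (I : Set α) : Prop :=
  I ⊆ HB P ∧ SatModel (sReduct P I) I ∧ ∀ J ⊆ I, SatModel (sReduct P I) J → J = I

/-- Bipolar LPs: each rule body is a single naf-literal -/
def IsBipolarLP {α : Type} (P : LP α) : Prop :=
  ∀ r ∈ P, ∃ b, r.body = {Lit.neg b}

/-- All (positive and naf) literals over the Herbrand base of P -/
def LitsOf {α : Type} (P : LP α) : Set (Lit α) :=
  {l | ∃ p ∈ HB P, l = Lit.pos p ∨ l = Lit.neg p}

section Aux

variable {α : Type}

lemma neg_mem_delta {P : LP α} {I : Set α} {p : α} :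
    Lit.neg p ∈ DeltaSet P I ↔ p ∈ HB P ∧ p ∉ I := by
  constructor
  · rintro ⟨q, hq, hqI, heq⟩
    injection heq with h; subst h; exact ⟨hq, hqI⟩
  · rintro ⟨h1, h2⟩; exact ⟨p, h1, h2, rfl⟩

lemma pos_not_mem_delta {P : LP α} {I : Set α} {p : α} :
    Lit.pos p ∉ DeltaSet P I := by
  rintro ⟨q, hq, hqI, heq⟩; exact nomatch heq

lemma headPos_eq_some {r : ABARule (Lit α)} {p : α} :
    headPos r = some p ↔ r.head = Lit.pos p := by
  cases hh : r.head <;> simp [headPos, hh]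

lemma headPos_eq_none {r : ABARule (Lit α)} :
    headPos r = none ↔ ∃ a, r.head = Lit.neg a := by
  cases hh : r.head <;> simp [headPos, hh]

lemma bodyNeg_not_mem {r : ABARule (Lit α)} {I : Set α} (h : bodyNeg r ∩ I = ∅)
    {c : α} (hc : Lit.neg c ∈ r.body) : c ∉ I := fun hcI =>
  Set.eq_empty_iff_forall_notMem.mp h c ⟨hc, hcI⟩

/-- soundness of ABA derivations from Δ(I) when I satisfies the reduct -/
lemma deriv_sound {P : LP α} {I : Set α} (hsat : SatModel (reduct P I) I)
    {l : Lit α} (h : Deriv P (DeltaSet P I) l) :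
    (∀ p, l = Lit.pos p → p ∈ I) ∧ (∀ p, l = Lit.neg p → p ∉ I) := by
  induction h with
  | assum hs =>
    obtain ⟨q, hq, hqI, rfl⟩ := hs
    refine ⟨fun p hp => (nomatch hp), fun p hp => ?_⟩
    injection hp with h; subst h; exact hqI
  | @step r hr hb ih =>
    have hbp : bodyPos r ⊆ I := fun a ha => (ih _ ha).1 a rfl
    have hbn : bodyNeg r ∩ I = ∅ := by
      apply Set.eq_empty_iff_forall_notMem.mpr
      rintro a ⟨ha, haI⟩
      exact (ih _ ha).2 a rfl haI
    constructor
    · intro p hp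
      have hq : (⟨some p, bodyPos r⟩ : PosRule α) ∈ reduct P I := by
        refine ⟨r, hr, hbn, ?_, ?_⟩
        · intro a ha
          have ha' : r.head = Lit.neg a := ha
          rw [hp] at ha'; exact nomatch ha'
        · rw [show headPos r = some p from headPos_eq_some.mpr hp]
      exact (hsat.1 p).2 ⟨_, hq, rfl, hbp⟩
    · intro p hp hpI
      have hq : (⟨none, bodyPos r⟩ : PosRule α) ∈ reduct P I := by
        refine ⟨r, hr, hbn, ?_, ?_⟩
        · intro a ha
          have ha' : r.head = Lit.neg a := ha
          rw [hp] at ha'; injection ha' with h; subst h; exact hpI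
        · rw [show headPos r = none from headPos_eq_none.mpr ⟨p, hp⟩]
      exact hsat.2 _ hq rfl hbp

lemma posDeriv_mem {P : LP α} {I : Set α}
    (ha : ∀ p, p ∈ I ↔ ∃ q ∈ reduct P I, q.head = some p ∧ q.body ⊆ I)
    {p : α} (h : PosDeriv (reduct P I) p) : p ∈ I := by
  induction h with
  | step hq hh _ ih => exact (ha _).2 ⟨_, hq, hh, ih⟩

lemma mem_posDeriv {P : LP α} {I : Set α} (hst : StableModel P I)
    {p : α} (hp : p ∈ I) : PosDeriv (reduct P I) p := by
  set J : Set α := {a | PosDeriv (reduct P I) a} with hJ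
  have hJI : J ⊆ I := fun a h => posDeriv_mem hst.2.1.1 h
  have hsatJ : SatModel (reduct P I) J := by
    constructor
    · intro q
      constructor
      · intro hq
        rcases hq with (⟨hq, hh, hb⟩)
        exact ⟨_, hq, hh, hb⟩
      · rintro ⟨r, hr, hh, hb⟩
        exact PosDeriv.step hr hh hb
    · intro q hq hh hb
      exact hst.2.1.2 q hq hh (fun a ha => hJI (hb ha))
  have hJeq : J = I := hst.2.2 J hJI hsatJ
  rw [← hJeq] at hp; exact hp

lemma deriv_of_posDeriv {P : LP α} {I : Set α}
    {p : α} (h : PosDeriv (reduct P I) p) : Deriv P (DeltaSet P I) (Lit.pos p) := by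
  induction h with
  | @step q a hq hh _ ih =>
    obtain ⟨r, hr, hbn, hhn, rfl⟩ := hq
    have hhead : r.head = Lit.pos a := headPos_eq_some.mp hh
    rw [← hhead]
    refine Deriv.step hr ?_
    intro b hb
    cases b with
    | pos c => exact ih c hb
    | neg c =>
      refine Deriv.assum (neg_mem_delta.mpr ⟨?_, bodyNeg_not_mem hbn hb⟩)
      exact ⟨r, hr, Or.inr (Or.inr (Or.inr hb))⟩

lemma deriv_cases {σ : Type} {R : Set (ABARule σ)} {S : Set σ} {l : σ}
    (h : Deriv R S l) :
    l ∈ S ∨ ∃ r ∈ R, r.head = l ∧ ∀ b ∈ r.body, Deriv R S b := by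
  cases h with
  | assum hs => exact Or.inl hs
  | step hr hb => exact Or.inr ⟨_, hr, rfl, hb⟩

/-- reverse direction: derivable positive literals are in I -/
lemma deriv_pos_imp {P : LP α} {I : Set α}
    (hse : StableExt (ABAFofLP P) (DeltaSet P I))
    {p : α} (h : Deriv P (DeltaSet P I) (Lit.pos p)) : p ∈ I := by
  have hHB : p ∈ HB P := by
    rcases deriv_cases h with hs | ⟨r, hr, hh, _⟩
    · exact absurd hs pos_not_mem_delta
    · exact ⟨r, hr, Or.inl hh⟩
  by_contra hpI
  exact hse.2.1 (Lit.neg p) (neg_mem_delta.mpr ⟨hHB, hpI⟩) h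

lemma deriv_neg_imp {P : LP α} {I : Set α}
    (hse : StableExt (ABAFofLP P) (DeltaSet P I))
    {p : α} (h : Deriv P (DeltaSet P I) (Lit.neg p)) : p ∉ I := by
  rcases deriv_cases h with hs | ⟨r, hr, hh, _⟩
  · exact (neg_mem_delta.mp hs).2
  · have hHB : p ∈ HB P := ⟨r, hr, Or.inr (Or.inl hh)⟩
    have hA : Lit.neg p ∈ (ABAFofLP P).A := ⟨p, hHB, rfl⟩
    have := hse.2.2.1 (Lit.neg p) hA h
    exact (neg_mem_delta.mp this).2

lemma mem_imp_deriv {P : LP α} {I : Set α} (hI : I ⊆ HB P)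
    (hse : StableExt (ABAFofLP P) (DeltaSet P I))
    {p : α} (hp : p ∈ I) : Deriv P (DeltaSet P I) (Lit.pos p) := by
  have hA : Lit.neg p ∈ (ABAFofLP P).A := ⟨p, hI hp, rfl⟩
  have hns : Lit.neg p ∉ DeltaSet P I := fun h => (neg_mem_delta.mp h).2 hp
  exact hse.2.2.2 (Lit.neg p) hA hns

/-- derive any body of a rule all of whose positive atoms are in I and negative not -/
lemma deriv_body {P : LP α} {I : Set α} (hI : I ⊆ HB P)
    (hse : StableExt (ABAFofLP P) (DeltaSet P I))
    {r : ABARule (Lit α)} (hr : r ∈ P) (hbp : bodyPos r ⊆ I)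
    (hbn : bodyNeg r ∩ I = ∅) :
    ∀ b ∈ r.body, Deriv P (DeltaSet P I) b := by
  intro b hb
  cases b with
  | pos c => exact mem_imp_deriv hI hse (hbp hb)
  | neg c =>
    refine Deriv.assum (neg_mem_delta.mpr ⟨?_, bodyNeg_not_mem hbn hb⟩)
    exact ⟨r, hr, Or.inr (Or.inr (Or.inr hb))⟩

end Aux

/-- I ⊆ HB_P is a stable model of P iff Δ(I) is a stable extension of D_P. -/
theorem stmt3 {α : Type} (P : LP α) (I : Set α) (hI : I ⊆ HB P) :
    StableModel P I ↔ StableExt (ABAFofLP P) (DeltaSet P I) := by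
  constructor
  · intro hst
    refine ⟨?_, ?_, ?_, ?_⟩
    · rintro l ⟨p, hHB, hpI, rfl⟩; exact ⟨p, hHB, rfl⟩
    · rintro a ⟨p, hHB, hpI, rfl⟩ hder
      exact hpI ((deriv_sound hst.2.1 hder).1 p rfl)
    · rintro a ⟨p, hHB, rfl⟩ hder
      exact neg_mem_delta.mpr ⟨hHB, (deriv_sound hst.2.1 hder).2 p rfl⟩
    · rintro x ⟨p, hHB, rfl⟩ hxs
      have hpI : p ∈ I := by
        by_contra hpI
        exact hxs (neg_mem_delta.mpr ⟨hHB, hpI⟩)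
      exact deriv_of_posDeriv (mem_posDeriv hst hpI)
  · intro hse
    have hsat : SatModel (reduct P I) I := by
      constructor
      · intro p
        constructor
        · intro hp
          rcases deriv_cases (mem_imp_deriv hI hse hp) with hs | ⟨r, hr, hh, hb⟩
          · exact absurd hs pos_not_mem_delta
          · have hbp : bodyPos r ⊆ I := fun a ha => deriv_pos_imp hse (hb _ ha)
            have hbn : bodyNeg r ∩ I = ∅ := by
              apply Set.eq_empty_iff_forall_notMem.mpr
              rintro a ⟨ha, haI⟩
              exact deriv_neg_imp hse (hb _ ha) haI
            refine ⟨⟨some p, bodyPos r⟩, ⟨r, hr, hbn, ?_, ?_⟩, rfl, hbp⟩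
            · intro a ha
              have ha' : r.head = Lit.neg a := ha
              rw [hh] at ha'; exact nomatch ha'
            · rw [show headPos r = some p from headPos_eq_some.mpr hh]
        · rintro ⟨q, ⟨r, hr, hbn, hhn, rfl⟩, hh, hb⟩
          have hhead : r.head = Lit.pos p := headPos_eq_some.mp hh
          have := Deriv.step hr (deriv_body hI hse hr hb hbn)
          rw [hhead] at this
          exact deriv_pos_imp hse this
      · rintro q ⟨r, hr, hbn, hhn, rfl⟩ hh hb
        obtain ⟨a, hhead⟩ := headPos_eq_none.mp hh
        have hder := Deriv.step hr (deriv_body hI hse hr hb hbn)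
        rw [hhead] at hder
        exact deriv_neg_imp hse hder (hhn hhead)
    refine ⟨hI, hsat, ?_⟩
    intro J hJI hsatJ
    refine Set.Subset.antisymm hJI ?_
    intro p hp
    have key : ∀ l, Deriv P (DeltaSet P I) l → ∀ q, l = Lit.pos q → q ∈ J := by
      intro l h
      induction h with
      | assum hs =>
        rintro q rfl
        exact absurd hs pos_not_mem_delta
      | @step r hr hb ih =>
        intro q hq
        have hbp : bodyPos r ⊆ J := fun a ha => ih _ ha a rfl
        have hbn : bodyNeg r ∩ I = ∅ := by
          apply Set.eq_empty_iff_forall_notMem.mpr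
          rintro a ⟨ha, haI⟩
          exact deriv_neg_imp hse (hb _ ha) haI
        refine (hsatJ.1 q).2 ⟨⟨some q, bodyPos r⟩, ⟨r, hr, hbn, ?_, ?_⟩, rfl, hbp⟩
        · intro a ha
          have ha' : r.head = Lit.neg a := ha
          rw [hq] at ha'; exact nomatch ha'
        · rw [show headPos r = some q from headPos_eq_some.mpr hq]
    exact key _ (mem_imp_deriv hI hse hp) p rfl
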